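/- arXiv:1110.4297 — 2 statements merged into one kernel-verified Lean document; each statement's English description precedes it below -/
import Mathlib

section
/- The map L₅(F) = −F₅(F) is an involutive linear isometry of 𝒩 = {F ∈ (v𝔽)′ : F = F₄(F)} and of 𝒩̃ = {F ∈ (v𝔽)′ : F = −F₄(F)}, commuting with the action on 𝔽 of every linear isometry A of V with A∘φ = φ∘A and Aξ = ξ, and it yields the orthogonal decompositions 𝒩 = 𝒬𝒮𝔽 ⊕ 𝒬𝒦𝔽 and 𝒩̃ = 𝔽₆ ⊕ 𝔽₇, where 𝒬𝒮𝔽 = {F : F = F₄(F) = F₅(F)}, 𝒬𝒦𝔽 = {F : F = F₄(F) = −F₅(F)}, 𝔽₆ = {F : F = −F₄(F) = F₅(F)}, and 𝔽₇ = {F : F = −F₄(F) = −F₅(F)} (all subspaces of (v𝔽)′). The components of F ∈ 𝒩 in 𝒬𝒮𝔽 and 𝒬𝒦𝔽 are (1/4){F₂(F)+F₄(F)+F₅(F)+F₆(F)} and (1/4){F₂(F)+F₄(F)−F₅(F)−F₆(F)}, and the components of F ∈ 𝒩̃ in 𝔽₆ and 𝔽₇ are (1/4){F₂(F)−F₄(F)+F₅(F)−F₆(F)}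 and (1/4){F₂(F)−F₄(F)−F₅(F)+F₆(F)}. -/
open scoped BigOperators RealInnerProductSpace

noncomputable section

variable {V : Type*} [NormedAddCommGroup V] [InnerProductSpace ℝ V]

/-- A map `V → V → V → ℝ` linear in each of its three arguments. -/
def Trilinear (F : V → V → V → ℝ) : Prop :=
  (∀ y z, IsLinearMap ℝ fun x => F x y z) ∧
  (∀ x z, IsLinearMap ℝ fun y => F x y z) ∧
  (∀ x y, IsLinearMap ℝ fun z => F x y z)

/-- Almost contact metric structure `(φ, ξ, η, g)` on `V` with `dim V = 2n+1`. -/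
def ACM (n : ℕ) (φ : V →ₗ[ℝ] V) (ξ : V) (η : V →ₗ[ℝ] ℝ) : Prop :=
  Module.finrank ℝ V = 2 * n + 1 ∧
  (∀ x, φ (φ x) = -x + η x • ξ) ∧
  φ ξ = 0 ∧
  (∀ x, η (φ x) = 0) ∧
  ⟪ξ, ξ⟫ = 1 ∧
  (∀ x y, ⟪φ x, φ y⟫ = ⟪x, y⟫ - η x * η y)

/-- Membership in the space `𝔽` of trilinear forms with the symmetries (1). -/
def InF (φ : V →ₗ[ℝ] V) (ξ : V) (η : V →ₗ[ℝ] ℝ) (F : V → V → V → ℝ) : Prop :=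
  Trilinear F ∧
  (∀ x y z, F x y z = -F x z y) ∧
  (∀ x y z, F x y z = -F x (φ y) (φ z) + η y * F x ξ z + η z * F x y ξ)

/-- `h x = -φ²x`. -/
def hMap (φ : V →ₗ[ℝ] V) (x : V) : V := -φ (φ x)

/-- `hF(x,y,z) = F(hx,hy,hz)`. -/
def hF (φ : V →ₗ[ℝ] V) (F : V → V → V → ℝ) : V → V → V → ℝ :=
  fun x y z => F (hMap φ x) (hMap φ y) (hMap φ z)

def F1 (ξ : V) (η : V →ₗ[ℝ] ℝ) (F : V → V → V → ℝ) : V → V → V → ℝ :=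
  fun x y z => η x * F ξ y z

def F2 (ξ : V) (η : V →ₗ[ℝ] ℝ) (F : V → V → V → ℝ) : V → V → V → ℝ :=
  fun x y z => η y * F x ξ z - η z * F x ξ y

def F3 (ξ : V) (η : V →ₗ[ℝ] ℝ) (F : V → V → V → ℝ) : V → V → V → ℝ :=
  fun x y z => η x * η y * F ξ ξ z - η x * η z * F ξ ξ y

def F4 (φ : V →ₗ[ℝ] V) (ξ : V) (η : V →ₗ[ℝ] ℝ) (F : V → V → V → ℝ) : V → V → V → ℝ :=
  fun x y z => η y * F (φ x) ξ (φ z) - η z * F (φ x) ξ (φ y)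

def F5 (ξ : V) (η : V →ₗ[ℝ] ℝ) (F : V → V → V → ℝ) : V → V → V → ℝ :=
  fun x y z => η y * F z ξ x - η z * F y ξ x

def F6 (φ : V →ₗ[ℝ] V) (ξ : V) (η : V →ₗ[ℝ] ℝ) (F : V → V → V → ℝ) : V → V → V → ℝ :=
  fun x y z => η y * F (φ z) ξ (φ x) - η z * F (φ y) ξ (φ x)

/-- `f(F)(z) = Σᵢ F(eᵢ, eᵢ, z)`. -/
def fTr {ι : Type*} [Fintype ι] (e : OrthonormalBasis ι ℝ V) (F : V → V → V → ℝ) (z : V) : ℝ :=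
  ∑ i, F (e i) (e i) z

/-- `f*(F)(z) = Σᵢ F(eᵢ, φ eᵢ, z)`. -/
def fTrStar {ι : Type*} [Fintype ι] (φ : V →ₗ[ℝ] V) (e : OrthonormalBasis ι ℝ V)
    (F : V → V → V → ℝ) (z : V) : ℝ :=
  ∑ i, F (e i) (φ (e i)) z

/-- The inner product on `𝔽`: `⟨F,G⟩ = Σ_{i,j,k} F(eᵢ,eⱼ,e_k) G(eᵢ,eⱼ,e_k)`. -/
def innerF {ι : Type*} [Fintype ι] (e : OrthonormalBasis ι ℝ V) (F G : V → V → V → ℝ) : ℝ :=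
  ∑ i, ∑ j, ∑ k, F (e i) (e j) (e k) * G (e i) (e j) (e k)

def F7 (n : ℕ) {ι : Type*} [Fintype ι] (e : OrthonormalBasis ι ℝ V) (ξ : V) (η : V →ₗ[ℝ] ℝ)
    (F : V → V → V → ℝ) : V → V → V → ℝ :=
  fun x y z => (1 / (2 * (n : ℝ))) * fTr e F ξ * (η z * ⟪x, y⟫ - η y * ⟪x, z⟫)

def F8 (n : ℕ) (φ : V →ₗ[ℝ] V) {ι : Type*} [Fintype ι] (e : OrthonormalBasis ι ℝ V) (ξ : V)
    (η : V →ₗ[ℝ] ℝ) (F : V → V → V → ℝ) : V → V → V → ℝ :=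
  fun x y z => -(1 / (2 * (n : ℝ))) * fTrStar φ e F ξ * (η z * ⟪x, φ y⟫ - η y * ⟪x, φ z⟫)

def F9 (n : ℕ) (φ : V →ₗ[ℝ] V) {ι : Type*} [Fintype ι] (e : OrthonormalBasis ι ℝ V)
    (F : V → V → V → ℝ) : V → V → V → ℝ :=
  fun x y z => (1 / (2 * ((n : ℝ) - 1))) *
    (⟪hMap φ x, hMap φ y⟫ * fTr e F z - ⟪hMap φ x, hMap φ z⟫ * fTr e F y
      - ⟪x, φ y⟫ * fTr e F (φ z) + ⟪x, φ z⟫ * fTr e F (φ y))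

def F10 (φ : V →ₗ[ℝ] V) (F : V → V → V → ℝ) : V → V → V → ℝ :=
  fun x y z => (1 / 2) * (F x y z + F (φ x) (φ y) z)

def F11 (φ : V →ₗ[ℝ] V) (F : V → V → V → ℝ) : V → V → V → ℝ :=
  fun x y z => (1 / 6) * (F x y z + F y z x + F z x y
    - F (φ x) (φ y) z - F (φ y) (φ z) x - F (φ z) (φ x) y)

def F12 (φ : V →ₗ[ℝ] V) (F : V → V → V → ℝ) : V → V → V → ℝ :=
  fun x y z => (1 / 2) * (F x y z - F (φ x) (φ y) z)

/-- The action of a linear isometry `A` of `V` on trilinear forms: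
`(A·F)(x,y,z) = F(A⁻¹x, A⁻¹y, A⁻¹z)`. -/
def actA (A : V ≃ₗᵢ[ℝ] V) (F : V → V → V → ℝ) : V → V → V → ℝ :=
  fun x y z => F (A.symm x) (A.symm y) (A.symm z)

def L1 (ξ : V) (η : V →ₗ[ℝ] ℝ) (F : V → V → V → ℝ) : V → V → V → ℝ :=
  fun x y z => F x y z - 2 * F3 ξ η F x y z

def L2 (ξ : V) (η : V →ₗ[ℝ] ℝ) (F : V → V → V → ℝ) : V → V → V → ℝ :=
  fun x y z => F x y z - 2 * (F1 ξ η F x y z + F2 ξ η F x y z)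

def L3 (ξ : V) (η : V →ₗ[ℝ] ℝ) (F : V → V → V → ℝ) : V → V → V → ℝ :=
  fun x y z => F2 ξ η F x y z - F1 ξ η F x y z

def L4 (φ : V →ₗ[ℝ] V) (ξ : V) (η : V →ₗ[ℝ] ℝ) (F : V → V → V → ℝ) : V → V → V → ℝ :=
  fun x y z => -F4 φ ξ η F x y z

def L5 (ξ : V) (η : V →ₗ[ℝ] ℝ) (F : V → V → V → ℝ) : V → V → V → ℝ :=
  fun x y z => -F5 ξ η F x y z

def L6 (n : ℕ) {ι : Type*} [Fintype ι] (e : OrthonormalBasis ι ℝ V) (ξ : V) (η : V →ₗ[ℝ] ℝ)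
    (F : V → V → V → ℝ) : V → V → V → ℝ :=
  fun x y z => F x y z - 2 * F7 n e ξ η F x y z

def L7 (n : ℕ) (φ : V →ₗ[ℝ] V) {ι : Type*} [Fintype ι] (e : OrthonormalBasis ι ℝ V) (ξ : V)
    (η : V →ₗ[ℝ] ℝ) (F : V → V → V → ℝ) : V → V → V → ℝ :=
  fun x y z => F x y z - 2 * F8 n φ e ξ η F x y z

/-- The subspace `𝔽₁ = {F ∈ 𝔽 : F = F₃(F)}`. -/
def MemF1sub (φ : V →ₗ[ℝ] V) (ξ : V) (η : V →ₗ[ℝ] ℝ) (F : V → V → V → ℝ) : Prop :=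
  InF φ ξ η F ∧ F = F3 ξ η F

/-- The subspace `v𝔽 = {F ∈ 𝔽 : hF = 0, ω(F) = 0}`. -/
def MemVF (φ : V →ₗ[ℝ] V) (ξ : V) (η : V →ₗ[ℝ] ℝ) (F : V → V → V → ℝ) : Prop :=
  InF φ ξ η F ∧ hF φ F = 0 ∧ ∀ z, F ξ ξ z = 0

/-- The subspace `h𝔽 = {F ∈ 𝔽 : F₁(F) = F₂(F) = 0}`. -/
def MemHF (φ : V →ₗ[ℝ] V) (ξ : V) (η : V →ₗ[ℝ] ℝ) (F : V → V → V → ℝ) : Prop :=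
  InF φ ξ η F ∧ F1 ξ η F = 0 ∧ F2 ξ η F = 0

/-- The subspace `(v𝔽)′ = {F ∈ 𝔽 : hF = 0, F(ξ,·,·) = 0}`. -/
def MemVF' (φ : V →ₗ[ℝ] V) (ξ : V) (η : V →ₗ[ℝ] ℝ) (F : V → V → V → ℝ) : Prop :=
  InF φ ξ η F ∧ hF φ F = 0 ∧ ∀ y z, F ξ y z = 0

/-- The subspace `𝔽₈ = {F ∈ 𝔽 : hF = 0, F(·,·,ξ) = 0}`. -/
def MemF8sub (φ : V →ₗ[ℝ] V) (ξ : V) (η : V →ₗ[ℝ] ℝ) (F : V → V → V → ℝ) : Prop :=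
  InF φ ξ η F ∧ hF φ F = 0 ∧ ∀ x y, F x y ξ = 0

/-- The subspace `𝒩 = {F ∈ (v𝔽)′ : F = F₄(F)}`. -/
def MemN (φ : V →ₗ[ℝ] V) (ξ : V) (η : V →ₗ[ℝ] ℝ) (F : V → V → V → ℝ) : Prop :=
  MemVF' φ ξ η F ∧ F = F4 φ ξ η F

/-- The subspace `𝒩̃ = {F ∈ (v𝔽)′ : F = -F₄(F)}`. -/
def MemNt (φ : V →ₗ[ℝ] V) (ξ : V) (η : V →ₗ[ℝ] ℝ) (F : V → V → V → ℝ) : Prop :=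
  MemVF' φ ξ η F ∧ F = -F4 φ ξ η F

/-- The subspace `𝒬𝒮𝔽 = {F ∈ (v𝔽)′ : F = F₄(F) = F₅(F)}`. -/
def MemQS (φ : V →ₗ[ℝ] V) (ξ : V) (η : V →ₗ[ℝ] ℝ) (F : V → V → V → ℝ) : Prop :=
  MemVF' φ ξ η F ∧ F = F4 φ ξ η F ∧ F = F5 ξ η F

/-- The subspace `𝒬𝒦𝔽 = {F ∈ (v𝔽)′ : F = F₄(F) = -F₅(F)}`. -/
def MemQK (φ : V →ₗ[ℝ] V) (ξ : V) (η : V →ₗ[ℝ] ℝ) (F : V → V → V → ℝ) : Prop :=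
  MemVF' φ ξ η F ∧ F = F4 φ ξ η F ∧ F = -F5 ξ η F

/-- The subspace `𝔽₆ = {F ∈ (v𝔽)′ : F = -F₄(F) = F₅(F)}`. -/
def MemF6sub (φ : V →ₗ[ℝ] V) (ξ : V) (η : V →ₗ[ℝ] ℝ) (F : V → V → V → ℝ) : Prop :=
  MemVF' φ ξ η F ∧ F = -F4 φ ξ η F ∧ F = F5 ξ η F

/-- The subspace `𝔽₇ = {F ∈ (v𝔽)′ : F = -F₄(F) = -F₅(F)}`. -/
def MemF7sub (φ : V →ₗ[ℝ] V) (ξ : V) (η : V →ₗ[ℝ] ℝ) (F : V → V → V → ℝ) : Prop :=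
  MemVF' φ ξ η F ∧ F = -F4 φ ξ η F ∧ F = -F5 ξ η F

/-- The subspace `𝔽₂ = {F ∈ 𝔽 : F = F₇(F)}`. -/
def MemF2sub (n : ℕ) {ι : Type*} [Fintype ι] (e : OrthonormalBasis ι ℝ V) (φ : V →ₗ[ℝ] V)
    (ξ : V) (η : V →ₗ[ℝ] ℝ) (F : V → V → V → ℝ) : Prop :=
  InF φ ξ η F ∧ F = F7 n e ξ η F

/-- The subspace `𝔽₃ = {F ∈ 𝔽 : F = F₈(F)}`. -/
def MemF3sub (n : ℕ) {ι : Type*} [Fintype ι] (e : OrthonormalBasis ι ℝ V) (φ : V →ₗ[ℝ] V)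
    (ξ : V) (η : V →ₗ[ℝ] ℝ) (F : V → V → V → ℝ) : Prop :=
  InF φ ξ η F ∧ F = F8 n φ e ξ η F

/-- The subspace `𝔽₄ = {F ∈ 𝔽 : F = F₄(F) = F₅(F), f(F)(ξ) = 0}`. -/
def MemF4sub (n : ℕ) {ι : Type*} [Fintype ι] (e : OrthonormalBasis ι ℝ V) (φ : V →ₗ[ℝ] V)
    (ξ : V) (η : V →ₗ[ℝ] ℝ) (F : V → V → V → ℝ) : Prop :=
  InF φ ξ η F ∧ F = F4 φ ξ η F ∧ F = F5 ξ η F ∧ fTr e F ξ = 0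

/-- The subspace `𝔽₅ = {F ∈ 𝔽 : F = F₄(F) = -F₅(F), f*(F)(ξ) = 0}`. -/
def MemF5sub (n : ℕ) {ι : Type*} [Fintype ι] (e : OrthonormalBasis ι ℝ V) (φ : V →ₗ[ℝ] V)
    (ξ : V) (η : V →ₗ[ℝ] ℝ) (F : V → V → V → ℝ) : Prop :=
  InF φ ξ η F ∧ F = F4 φ ξ η F ∧ F = -F5 ξ η F ∧ fTrStar φ e F ξ = 0

/-- The subspace `𝔽₄ = {F ∈ (v𝔽)′ : F = F₄(F) = F₅(F), f(F)(ξ) = 0}`. -/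
def MemF4sub' (n : ℕ) {ι : Type*} [Fintype ι] (e : OrthonormalBasis ι ℝ V) (φ : V →ₗ[ℝ] V)
    (ξ : V) (η : V →ₗ[ℝ] ℝ) (F : V → V → V → ℝ) : Prop :=
  MemVF' φ ξ η F ∧ F = F4 φ ξ η F ∧ F = F5 ξ η F ∧ fTr e F ξ = 0

/-- The subspace `𝔽₅ = {F ∈ (v𝔽)′ : F = F₄(F) = -F₅(F), f*(F)(ξ) = 0}`. -/
def MemF5sub' (n : ℕ) {ι : Type*} [Fintype ι] (e : OrthonormalBasis ι ℝ V) (φ : V →ₗ[ℝ] V)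
    (ξ : V) (η : V →ₗ[ℝ] ℝ) (F : V → V → V → ℝ) : Prop :=
  MemVF' φ ξ η F ∧ F = F4 φ ξ η F ∧ F = -F5 ξ η F ∧ fTrStar φ e F ξ = 0

/-- The subspace `𝔽₉ = {F ∈ 𝔽 : F = hF = F₉(F)}`. -/
def MemF9sub (n : ℕ) {ι : Type*} [Fintype ι] (e : OrthonormalBasis ι ℝ V) (φ : V →ₗ[ℝ] V)
    (ξ : V) (η : V →ₗ[ℝ] ℝ) (F : V → V → V → ℝ) : Prop :=
  InF φ ξ η F ∧ F = hF φ F ∧ F = F9 n φ e F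

/-- The subspace `𝔽₁₀ = {F ∈ 𝔽 : F = hF = F₁₀(F) - F₉(F)}`. -/
def MemF10sub (n : ℕ) {ι : Type*} [Fintype ι] (e : OrthonormalBasis ι ℝ V) (φ : V →ₗ[ℝ] V)
    (ξ : V) (η : V →ₗ[ℝ] ℝ) (F : V → V → V → ℝ) : Prop :=
  InF φ ξ η F ∧ F = hF φ F ∧ F = F10 φ F - F9 n φ e F

/-- The subspace `𝔽₁₁ = {F ∈ 𝔽 : F = hF = F₁₁(F)}`. -/
def MemF11sub (φ : V →ₗ[ℝ] V) (ξ : V) (η : V →ₗ[ℝ] ℝ) (F : V → V → V → ℝ) : Prop :=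
  InF φ ξ η F ∧ F = hF φ F ∧ F = F11 φ F

/-- The subspace `𝔽₁₂ = {F ∈ 𝔽 : F = hF = F₁₂(F) - F₁₁(F)}`. -/
def MemF12sub (φ : V →ₗ[ℝ] V) (ξ : V) (η : V →ₗ[ℝ] ℝ) (F : V → V → V → ℝ) : Prop :=
  InF φ ξ η F ∧ F = hF φ F ∧ F = F12 φ F - F11 φ F

section Helpers

variable {n : ℕ} {φ : V →ₗ[ℝ] V} {ξ : V} {η : V →ₗ[ℝ] ℝ}

lemma app3 {F G : V → V → V → ℝ} (h : F = G) (x y z : V) : F x y z = G x y z := by rw [h]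

lemma eta_xi (h : ACM n φ ξ η) : η ξ = 1 := by
  obtain ⟨-, h2, h3, -, h5, -⟩ := h
  have hx := h2 ξ
  rw [h3, map_zero] at hx
  have h4 : (η ξ - 1) • ξ = 0 := by
    rw [sub_smul, one_smul, sub_eq_zero]
    rw [eq_comm, neg_add_eq_zero] at hx
    exact hx.symm
  rcases smul_eq_zero.1 h4 with h | h
  · linarith [sub_eq_zero.1 h]
  · rw [h] at h5; simp at h5
    -- h5 : ⟪0,0⟫ = 1
lemma eta_inner (h : ACM n φ ξ η) (x : V) : η x = ⟪x, ξ⟫ := by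
  have h6 := h.2.2.2.2.2 x ξ
  rw [h.2.2.1, eta_xi h] at h6
  simp at h6
  linarith

lemma hMap_eq' (h : ACM n φ ξ η) (x : V) : hMap φ x = x - η x • ξ := by
  simp [hMap, h.2.1 x, sub_eq_add_neg]; abel

lemma eta_h (h : ACM n φ ξ η) (x : V) : η (hMap φ x) = 0 := by
  rw [hMap_eq' h, map_sub, map_smul, smul_eq_mul, eta_xi h]; ring

lemma lin_sub1 {F : V → V → V → ℝ} (hT : Trilinear F) (x v y z : V) (a : ℝ) :
    F (x - a • v) y z = F x y z - a * F v y z := by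
  simpa [smul_eq_mul] using (IsLinearMap.mk' _ (hT.1 y z)).map_sub x (a • v)

lemma lin_sub2 {F : V → V → V → ℝ} (hT : Trilinear F) (x y v z : V) (a : ℝ) :
    F x (y - a • v) z = F x y z - a * F x v z := by
  simpa [smul_eq_mul] using (IsLinearMap.mk' _ (hT.2.1 x z)).map_sub y (a • v)

lemma lin_sub3 {F : V → V → V → ℝ} (hT : Trilinear F) (x y z v : V) (a : ℝ) :
    F x y (z - a • v) = F x y z - a * F x y v := by
  simpa [smul_eq_mul] using (IsLinearMap.mk' _ (hT.2.2 x y)).map_sub z (a • v)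

lemma lin_zero3 {F : V → V → V → ℝ} (hT : Trilinear F) (x y : V) : F x y 0 = 0 := by
  simpa using (IsLinearMap.mk' _ (hT.2.2 x y)).map_zero

lemma anti_xixi {F : V → V → V → ℝ} (hA : ∀ x y z, F x y z = -F x z y) (x : V) :
    F x ξ ξ = 0 := by linarith [hA x ξ ξ]

/-- representation of elements of (v𝔽)' -/
lemma rep (h : ACM n φ ξ η) {F : V → V → V → ℝ} (hF' : MemVF' φ ξ η F) (x y z : V) :
    F x y z = η y * F x ξ z - η z * F x ξ y := by
  obtain ⟨⟨tri, anti, -⟩, hh, hxi⟩ := hF'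
  have h0 : F (hMap φ x) (hMap φ y) (hMap φ z) = 0 := app3 hh x y z
  rw [hMap_eq' h, hMap_eq' h, hMap_eq' h] at h0
  rw [lin_sub1 tri, hxi, lin_sub2 tri, lin_sub3 tri, lin_sub3 tri,
    anti_xixi anti, anti x y ξ] at h0
  linear_combination h0

end Helpers
section Helpers2

variable {n : ℕ} {φ : V →ₗ[ℝ] V} {ξ : V} {η : V →ₗ[ℝ] ℝ}

/-- For `F = F₄(F)` (with trilinearity), `B(φx, φz) = B(x,z)`. -/
lemma b4 (h : ACM n φ ξ η) {F : V → V → V → ℝ} (hT : Trilinear F)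
    (h4 : F = F4 φ ξ η F) (x z : V) : F (φ x) ξ (φ z) = F x ξ z := by
  have := app3 h4 x ξ z
  rw [F4] at this
  rw [h.2.2.1, eta_xi h, lin_zero3 hT] at this
  linarith

/-- For `F = -F₄(F)` (with trilinearity), `B(φx, φz) = -B(x,z)`. -/
lemma b4neg (h : ACM n φ ξ η) {F : V → V → V → ℝ} (hT : Trilinear F)
    (h4 : F = -F4 φ ξ η F) (x z : V) : F (φ x) ξ (φ z) = -F x ξ z := by
  have := app3 h4 x ξ z
  rw [Pi.neg_apply, Pi.neg_apply, Pi.neg_apply, F4] at this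
  rw [h.2.2.1, eta_xi h, lin_zero3 hT] at this
  linarith

/-- `L5 F ∈ (v𝔽)'` whenever `F ∈ (v𝔽)'`. -/
lemma L5_memVF' (h : ACM n φ ξ η) {F : V → V → V → ℝ} (hF' : MemVF' φ ξ η F) :
    MemVF' φ ξ η (L5 ξ η F) := by
  obtain ⟨⟨tri, anti, hphi⟩, hh, hxi⟩ := hF'
  have hxx : ∀ a : V, F a ξ ξ = 0 := anti_xixi anti
  refine ⟨⟨⟨?_, ?_, ?_⟩, ?_, ?_⟩, ?_, ?_⟩
  · intro y z
    constructor
    · intro u v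
      have h1 := (tri.2.2 z ξ).map_add u v
      have h2 := (tri.2.2 y ξ).map_add u v
      simp only [L5, F5, h1, h2]; ring
    · intro c u
      have h1 := (tri.2.2 z ξ).map_smul c u
      have h2 := (tri.2.2 y ξ).map_smul c u
      simp only [smul_eq_mul] at h1 h2
      simp only [L5, F5, h1, h2, smul_eq_mul]; ring
  · intro x z
    constructor
    · intro u v
      have h1 := (tri.1 ξ x).map_add u v
      simp only [L5, F5, h1, map_add]; ring
    · intro c u
      have h1 := (tri.1 ξ x).map_smul c u
      simp only [smul_eq_mul] at h1
      simp only [L5, F5, h1, map_smul, smul_eq_mul]; ring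
  · intro x y
    constructor
    · intro u v
      have h1 := (tri.1 ξ x).map_add u v
      simp only [L5, F5, h1, map_add]; ring
    · intro c u
      have h1 := (tri.1 ξ x).map_smul c u
      simp only [smul_eq_mul] at h1
      simp only [L5, F5, h1, map_smul, smul_eq_mul]; ring
  · intro x y z
    simp only [L5, F5]; ring
  · intro x y z
    simp only [L5, F5]
    rw [h.2.2.2.1 y, h.2.2.2.1 z, eta_xi h]
    simp only [hxi]; ring
  · funext x y z
    show L5 ξ η F (hMap φ x) (hMap φ y) (hMap φ z) = 0
    simp only [L5, F5]
    rw [eta_h h, eta_h h]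
    ring
  · intro y z
    simp only [L5, F5]
    rw [hxx, hxx]
    ring

/-- Pointwise involution of L5 on (v𝔽)'. -/
lemma L5_invol (h : ACM n φ ξ η) {F : V → V → V → ℝ} (hF' : MemVF' φ ξ η F) :
    L5 ξ η (L5 ξ η F) = F := by
  have hxi := hF'.2.2
  funext x y z
  simp only [L5, F5]
  rw [eta_xi h, hxi, hxi]
  rw [rep h hF' x y z]
  ring

/-- closure of (v𝔽)' under linear combinations (pointwise form). -/
lemma memVF'_comb (h : ACM n φ ξ η) (a b : ℝ) {F G : V → V → V → ℝ}
    (hF' : MemVF' φ ξ η F) (hG' : MemVF' φ ξ η G) :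
    MemVF' φ ξ η (fun x y z => a * F x y z + b * G x y z) := by
  obtain ⟨⟨triF, antiF, hphiF⟩, hhF, hxiF⟩ := hF'
  obtain ⟨⟨triG, antiG, hphiG⟩, hhG, hxiG⟩ := hG'
  have hhF' : ∀ x y z, F (hMap φ x) (hMap φ y) (hMap φ z) = 0 := fun x y z => app3 hhF x y z
  have hhG' : ∀ x y z, G (hMap φ x) (hMap φ y) (hMap φ z) = 0 := fun x y z => app3 hhG x y z
  refine ⟨⟨⟨?_, ?_, ?_⟩, ?_, ?_⟩, ?_, ?_⟩
  · intro y z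
    constructor
    · intro u v
      have h1 := (triF.1 y z).map_add u v
      have h2 := (triG.1 y z).map_add u v
      simp only [h1, h2]; ring
    · intro c u
      have h1 := (triF.1 y z).map_smul c u
      have h2 := (triG.1 y z).map_smul c u
      simp only [smul_eq_mul] at h1 h2
      simp only [h1, h2, smul_eq_mul]; ring
  · intro x z
    constructor
    · intro u v
      have h1 := (triF.2.1 x z).map_add u v
      have h2 := (triG.2.1 x z).map_add u v
      simp only [h1, h2]; ring
    · intro c u
      have h1 := (triF.2.1 x z).map_smul c u
      have h2 := (triG.2.1 x z).map_smul c u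
      simp only [smul_eq_mul] at h1 h2
      simp only [h1, h2, smul_eq_mul]; ring
  · intro x y
    constructor
    · intro u v
      have h1 := (triF.2.2 x y).map_add u v
      have h2 := (triG.2.2 x y).map_add u v
      simp only [h1, h2]; ring
    · intro c u
      have h1 := (triF.2.2 x y).map_smul c u
      have h2 := (triG.2.2 x y).map_smul c u
      simp only [smul_eq_mul] at h1 h2
      simp only [h1, h2, smul_eq_mul]; ring
  · intro x y z
    simp only
    rw [antiF x y z, antiG x y z]; ring
  · intro x y z
    simp only
    rw [hphiF x y z, hphiG x y z]; ring
  · funext x y z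
    show a * F (hMap φ x) (hMap φ y) (hMap φ z) + b * G (hMap φ x) (hMap φ y) (hMap φ z) = 0
    rw [hhF', hhG']; ring
  · intro y z
    simp only
    rw [hxiF, hxiG]; ring

/-- pointwise linearity of F4 -/
lemma F4_comb (a b : ℝ) (F G : V → V → V → ℝ) :
    F4 φ ξ η (fun x y z => a * F x y z + b * G x y z) =
      fun x y z => a * F4 φ ξ η F x y z + b * F4 φ ξ η G x y z := by
  funext x y z; simp only [F4]; ring

/-- pointwise linearity of F5 -/
lemma F5_comb (a b : ℝ) (F G : V → V → V → ℝ) :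
    F5 ξ η (fun x y z => a * F x y z + b * G x y z) =
      fun x y z => a * F5 ξ η F x y z + b * F5 ξ η G x y z := by
  funext x y z; simp only [F5]; ring

lemma F5_L5 (h : ACM n φ ξ η) {F : V → V → V → ℝ} (hF' : MemVF' φ ξ η F) :
    F5 ξ η (L5 ξ η F) = fun x y z => -F x y z := by
  have h1 := L5_invol h hF'
  funext x y z
  have h2 := app3 h1 x y z
  simp only [L5] at h2
  linarith

end Helpers2
section Helpers3

variable {n : ℕ} {φ : V →ₗ[ℝ] V} {ξ : V} {η : V →ₗ[ℝ] ℝ}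

lemma sum_expand {ι : Type*} [Fintype ι] (w A C : ι → ℝ) :
    ∑ j, ∑ k, (w j * A k - w k * A j) * (w j * C k - w k * C j)
      = 2 * (∑ j, w j * w j) * (∑ k, A k * C k)
        - 2 * (∑ j, w j * A j) * (∑ k, w k * C k) := by
  have h1 : ∀ j, ∑ k, (w j * A k - w k * A j) * (w j * C k - w k * C j)
      = (w j * w j) * (∑ k, A k * C k) - (w j * C j) * (∑ k, w k * A k)
        - (w j * A j) * (∑ k, w k * C k) + (A j * C j) * (∑ k, w k * w k) := by
    intro j
    rw [Finset.mul_sum, Finset.mul_sum, Finset.mul_sum, Finset.mul_sum,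
      ← Finset.sum_sub_distrib, ← Finset.sum_sub_distrib, ← Finset.sum_add_distrib]
    exact Finset.sum_congr rfl fun k _ => by ring
  rw [Finset.sum_congr rfl fun j _ => h1 j]
  rw [Finset.sum_add_distrib, Finset.sum_sub_distrib, Finset.sum_sub_distrib,
    ← Finset.sum_mul, ← Finset.sum_mul, ← Finset.sum_mul, ← Finset.sum_mul]
  ring

lemma sum_eta_repr {ι : Type*} [Fintype ι] (h : ACM n φ ξ η) (e : OrthonormalBasis ι ℝ V) :
    ∑ j, η (e j) • e j = ξ := by
  have := e.sum_repr' ξ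
  rw [← this]
  exact Finset.sum_congr rfl fun j _ => by rw [eta_inner h, real_inner_comm]

lemma sum_eta_sq {ι : Type*} [Fintype ι] (h : ACM n φ ξ η) (e : OrthonormalBasis ι ℝ V) :
    ∑ j, η (e j) * η (e j) = 1 := by
  have h1 : ∑ j, η (η (e j) • e j) = η ξ := by rw [← map_sum, sum_eta_repr h e]
  simp only [map_smul, smul_eq_mul] at h1
  rw [h1, eta_xi h]

lemma sum_eta_B {ι : Type*} [Fintype ι] (h : ACM n φ ξ η) (e : OrthonormalBasis ι ℝ V)
    {F : V → V → V → ℝ} (hT : Trilinear F) (hA : ∀ x y z, F x y z = -F x z y) (x : V) :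
    ∑ j, η (e j) * F x ξ (e j) = 0 := by
  set L := IsLinearMap.mk' _ (hT.2.2 x ξ) with hL
  have hLv : ∀ v, L v = F x ξ v := fun v => rfl
  have h1 : ∑ j, η (e j) * F x ξ (e j) = ∑ j, L (η (e j) • e j) := by
    refine Finset.sum_congr rfl fun j _ => ?_
    rw [map_smul, smul_eq_mul, hLv]
  rw [h1, ← map_sum, sum_eta_repr h e, hLv, anti_xixi hA]

lemma inner_red {ι : Type*} [Fintype ι] (h : ACM n φ ξ η) (e : OrthonormalBasis ι ℝ V)
    {F G : V → V → V → ℝ} (hF' : MemVF' φ ξ η F) (hG' : MemVF' φ ξ η G) :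
    innerF e F G = 2 * ∑ i, ∑ k, F (e i) ξ (e k) * G (e i) ξ (e k) := by
  have repF := rep h hF'
  have repG := rep h hG'
  calc innerF e F G
      = ∑ i, ∑ j, ∑ k, (η (e j) * F (e i) ξ (e k) - η (e k) * F (e i) ξ (e j))
          * (η (e j) * G (e i) ξ (e k) - η (e k) * G (e i) ξ (e j)) := by
        refine Finset.sum_congr rfl fun i _ => Finset.sum_congr rfl fun j _ =>
          Finset.sum_congr rfl fun k _ => ?_
        rw [← repF, ← repG]
    _ = ∑ i, (2 * (∑ j, η (e j) * η (e j)) * (∑ k, F (e i) ξ (e k) * G (e i) ξ (e k))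
          - 2 * (∑ j, η (e j) * F (e i) ξ (e j)) * (∑ k, η (e k) * G (e i) ξ (e k))) :=
        Finset.sum_congr rfl fun i _ => sum_expand _ _ _
    _ = ∑ i, 2 * ∑ k, F (e i) ξ (e k) * G (e i) ξ (e k) := by
        refine Finset.sum_congr rfl fun i _ => ?_
        rw [sum_eta_sq h e, sum_eta_B h e hF'.1.1 hF'.1.2.1 (e i)]
        ring
    _ = 2 * ∑ i, ∑ k, F (e i) ξ (e k) * G (e i) ξ (e k) := by rw [Finset.mul_sum]

end Helpers3
section Helpers4

variable {n : ℕ} {φ : V →ₗ[ℝ] V} {ξ : V} {η : V →ₗ[ℝ] ℝ}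

lemma F5_L5' (h : ACM n φ ξ η) {F : V → V → V → ℝ} (hF' : MemVF' φ ξ η F) (x y z : V) :
    F5 ξ η (L5 ξ η F) x y z = -F x y z := by
  have h2 := app3 (L5_invol h hF') x y z
  simp only [L5] at h2
  linarith

lemma L5_B (h : ACM n φ ξ η) {F : V → V → V → ℝ} (hF' : MemVF' φ ξ η F) (a c : V) :
    L5 ξ η F a ξ c = -F c ξ a := by
  simp only [L5, F5]
  rw [eta_xi h, hF'.2.2]
  ring

lemma L5_memN (h : ACM n φ ξ η) {F : V → V → V → ℝ} (hN : MemN φ ξ η F) :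
    MemN φ ξ η (L5 ξ η F) := by
  obtain ⟨hVF, h4⟩ := hN
  refine ⟨L5_memVF' h hVF, ?_⟩
  have hb4 := b4 h hVF.1.1 h4
  funext x y z
  simp only [L5, F5, F4]
  rw [eta_xi h, h.2.2.2.1 z, h.2.2.2.1 y]
  simp only [hVF.2.2]
  rw [hb4 z x, hb4 y x]
  ring

lemma L5_memNt (h : ACM n φ ξ η) {F : V → V → V → ℝ} (hN : MemNt φ ξ η F) :
    MemNt φ ξ η (L5 ξ η F) := by
  obtain ⟨hVF, h4⟩ := hN
  refine ⟨L5_memVF' h hVF, ?_⟩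
  have hb4 := b4neg h hVF.1.1 h4
  funext x y z
  simp only [L5, F5, F4, Pi.neg_apply]
  rw [eta_xi h, h.2.2.2.1 z, h.2.2.2.1 y]
  simp only [hVF.2.2]
  rw [hb4 z x, hb4 y x]
  ring

lemma hP_N (h : ACM n φ ξ η) {F : V → V → V → ℝ} (hN : MemN φ ξ η F) :
    (fun x y z => (1 / 4) * (F2 ξ η F x y z + F4 φ ξ η F x y z +
        F5 ξ η F x y z + F6 φ ξ η F x y z))
      = fun x y z => (1 / 2) * F x y z + (-(1 / 2)) * L5 ξ η F x y z := by
  obtain ⟨hVF, h4⟩ := hN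
  have hb4 := b4 h hVF.1.1 h4
  funext x y z
  simp only [F2, F4, F5, F6, L5]
  rw [hb4 x z, hb4 x y, hb4 z x, hb4 y x, rep h hVF x y z]
  ring

lemma hQ_N (h : ACM n φ ξ η) {F : V → V → V → ℝ} (hN : MemN φ ξ η F) :
    (fun x y z => (1 / 4) * (F2 ξ η F x y z + F4 φ ξ η F x y z -
        F5 ξ η F x y z - F6 φ ξ η F x y z))
      = fun x y z => (1 / 2) * F x y z + (1 / 2) * L5 ξ η F x y z := by
  obtain ⟨hVF, h4⟩ := hN
  have hb4 := b4 h hVF.1.1 h4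
  funext x y z
  simp only [F2, F4, F5, F6, L5]
  rw [hb4 x z, hb4 x y, hb4 z x, hb4 y x, rep h hVF x y z]
  ring

lemma hP_Nt (h : ACM n φ ξ η) {F : V → V → V → ℝ} (hN : MemNt φ ξ η F) :
    (fun x y z => (1 / 4) * (F2 ξ η F x y z - F4 φ ξ η F x y z +
        F5 ξ η F x y z - F6 φ ξ η F x y z))
      = fun x y z => (1 / 2) * F x y z + (-(1 / 2)) * L5 ξ η F x y z := by
  obtain ⟨hVF, h4⟩ := hN
  have hb4 := b4neg h hVF.1.1 h4
  funext x y z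
  simp only [F2, F4, F5, F6, L5]
  rw [hb4 x z, hb4 x y, hb4 z x, hb4 y x, rep h hVF x y z]
  ring

lemma hQ_Nt (h : ACM n φ ξ η) {F : V → V → V → ℝ} (hN : MemNt φ ξ η F) :
    (fun x y z => (1 / 4) * (F2 ξ η F x y z - F4 φ ξ η F x y z -
        F5 ξ η F x y z + F6 φ ξ η F x y z))
      = fun x y z => (1 / 2) * F x y z + (1 / 2) * L5 ξ η F x y z := by
  obtain ⟨hVF, h4⟩ := hN
  have hb4 := b4neg h hVF.1.1 h4
  funext x y z
  simp only [F2, F4, F5, F6, L5]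
  rw [hb4 x z, hb4 x y, hb4 z x, hb4 y x, rep h hVF x y z]
  ring

lemma comb_memQS (h : ACM n φ ξ η) {F : V → V → V → ℝ} (hN : MemN φ ξ η F) :
    MemQS φ ξ η (fun x y z => (1 / 2) * F x y z + (-(1 / 2)) * L5 ξ η F x y z) := by
  have hL5N := L5_memN h hN
  have p4 : ∀ x y z, F4 φ ξ η F x y z = F x y z := fun x y z => (app3 hN.2 x y z).symm
  have p4L : ∀ x y z, F4 φ ξ η (L5 ξ η F) x y z = L5 ξ η F x y z :=
    fun x y z => (app3 hL5N.2 x y z).symm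
  have p5 : ∀ x y z, F5 ξ η F x y z = -L5 ξ η F x y z := by
    intro x y z; simp only [L5]; ring
  have p5L := F5_L5' h hN.1
  refine ⟨memVF'_comb h _ _ hN.1 (L5_memVF' h hN.1), ?_, ?_⟩
  · rw [F4_comb]
    funext x y z
    rw [p4, p4L]
  · rw [F5_comb]
    funext x y z
    rw [p5, p5L]
    ring

lemma comb_memQK (h : ACM n φ ξ η) {F : V → V → V → ℝ} (hN : MemN φ ξ η F) :
    MemQK φ ξ η (fun x y z => (1 / 2) * F x y z + (1 / 2) * L5 ξ η F x y z) := by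
  have hL5N := L5_memN h hN
  have p4 : ∀ x y z, F4 φ ξ η F x y z = F x y z := fun x y z => (app3 hN.2 x y z).symm
  have p4L : ∀ x y z, F4 φ ξ η (L5 ξ η F) x y z = L5 ξ η F x y z :=
    fun x y z => (app3 hL5N.2 x y z).symm
  have p5 : ∀ x y z, F5 ξ η F x y z = -L5 ξ η F x y z := by
    intro x y z; simp only [L5]; ring
  have p5L := F5_L5' h hN.1
  refine ⟨memVF'_comb h _ _ hN.1 (L5_memVF' h hN.1), ?_, ?_⟩
  · rw [F4_comb]
    funext x y z
    rw [p4, p4L]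
  · rw [F5_comb]
    funext x y z
    simp only [Pi.neg_apply]
    rw [p5, p5L]
    ring

lemma comb_memF6 (h : ACM n φ ξ η) {F : V → V → V → ℝ} (hN : MemNt φ ξ η F) :
    MemF6sub φ ξ η (fun x y z => (1 / 2) * F x y z + (-(1 / 2)) * L5 ξ η F x y z) := by
  have hL5N := L5_memNt h hN
  have p4 : ∀ x y z, F4 φ ξ η F x y z = -F x y z := by
    intro x y z
    have := app3 hN.2 x y z
    simp only [Pi.neg_apply] at this
    linarith
  have p4L : ∀ x y z, F4 φ ξ η (L5 ξ η F) x y z = -L5 ξ η F x y z := by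
    intro x y z
    have := app3 hL5N.2 x y z
    simp only [Pi.neg_apply] at this
    linarith
  have p5 : ∀ x y z, F5 ξ η F x y z = -L5 ξ η F x y z := by
    intro x y z; simp only [L5]; ring
  have p5L := F5_L5' h hN.1
  refine ⟨memVF'_comb h _ _ hN.1 (L5_memVF' h hN.1), ?_, ?_⟩
  · rw [F4_comb]
    funext x y z
    simp only [Pi.neg_apply]
    rw [p4, p4L]
    ring
  · rw [F5_comb]
    funext x y z
    rw [p5, p5L]
    ring

lemma comb_memF7 (h : ACM n φ ξ η) {F : V → V → V → ℝ} (hN : MemNt φ ξ η F) :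
    MemF7sub φ ξ η (fun x y z => (1 / 2) * F x y z + (1 / 2) * L5 ξ η F x y z) := by
  have hL5N := L5_memNt h hN
  have p4 : ∀ x y z, F4 φ ξ η F x y z = -F x y z := by
    intro x y z
    have := app3 hN.2 x y z
    simp only [Pi.neg_apply] at this
    linarith
  have p4L : ∀ x y z, F4 φ ξ η (L5 ξ η F) x y z = -L5 ξ η F x y z := by
    intro x y z
    have := app3 hL5N.2 x y z
    simp only [Pi.neg_apply] at this
    linarith
  have p5 : ∀ x y z, F5 ξ η F x y z = -L5 ξ η F x y z := by
    intro x y z; simp only [L5]; ring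
  have p5L := F5_L5' h hN.1
  refine ⟨memVF'_comb h _ _ hN.1 (L5_memVF' h hN.1), ?_, ?_⟩
  · rw [F4_comb]
    funext x y z
    simp only [Pi.neg_apply]
    rw [p4, p4L]
    ring
  · rw [F5_comb]
    funext x y z
    simp only [Pi.neg_apply]
    rw [p5, p5L]
    ring

lemma uniq_decomp {F q1 q2 p1 p2 : V → V → V → ℝ}
    (hq1 : q1 = F5 ξ η q1) (hq2 : q2 = -F5 ξ η q2)
    (hp1 : p1 = F5 ξ η p1) (hp2 : p2 = -F5 ξ η p2)
    (hq : F = q1 + q2) (hp : F = p1 + p2) : q1 = p1 ∧ q2 = p2 := by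
  have ha : ∀ x y z, q1 x y z + q2 x y z = p1 x y z + p2 x y z := by
    intro x y z
    have h0 := app3 (hq.symm.trans hp) x y z
    simpa using h0
  have e1 : ∀ x y z, q1 x y z = η y * q1 z ξ x - η z * q1 y ξ x := by
    intro x y z
    have := app3 hq1 x y z
    simp only [F5] at this
    linarith
  have e2 : ∀ x y z, q2 x y z = -(η y * q2 z ξ x - η z * q2 y ξ x) := by
    intro x y z
    have := app3 hq2 x y z
    simp only [F5, Pi.neg_apply] at this
    linarith
  have e3 : ∀ x y z, p1 x y z = η y * p1 z ξ x - η z * p1 y ξ x := by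
    intro x y z
    have := app3 hp1 x y z
    simp only [F5] at this
    linarith
  have e4 : ∀ x y z, p2 x y z = -(η y * p2 z ξ x - η z * p2 y ξ x) := by
    intro x y z
    have := app3 hp2 x y z
    simp only [F5, Pi.neg_apply] at this
    linarith
  have hd : ∀ x y z, q1 x y z - q2 x y z = p1 x y z - p2 x y z := by
    intro x y z
    rw [e1 x y z, e2 x y z, e3 x y z, e4 x y z]
    linear_combination (η y) * ha z ξ x - (η z) * ha y ξ x
  constructor
  · funext x y z; linarith [ha x y z, hd x y z]
  · funext x y z; linarith [ha x y z, hd x y z]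

lemma orth_gen {ι : Type*} [Fintype ι] (h : ACM n φ ξ η) (e : OrthonormalBasis ι ℝ V)
    {F G : V → V → V → ℝ} (hF' : MemVF' φ ξ η F) (hG' : MemVF' φ ξ η G)
    (h5F : F = F5 ξ η F) (h5G : G = -F5 ξ η G) : innerF e F G = 0 := by
  have hred := inner_red h e hF' hG'
  have bsym : ∀ x z, F x ξ z = F z ξ x := by
    intro x z
    have h0 := app3 h5F x ξ z
    simp only [F5] at h0
    rw [eta_xi h, hF'.2.2] at h0
    linarith
  have basym : ∀ x z, G x ξ z = -G z ξ x := by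
    intro x z
    have h0 := app3 h5G x ξ z
    simp only [F5, Pi.neg_apply] at h0
    rw [eta_xi h, hG'.2.2] at h0
    linarith
  have hS : (∑ i, ∑ k, F (e i) ξ (e k) * G (e i) ξ (e k))
      = -∑ i, ∑ k, F (e i) ξ (e k) * G (e i) ξ (e k) := by
    calc (∑ i, ∑ k, F (e i) ξ (e k) * G (e i) ξ (e k))
        = ∑ i, ∑ k, -(F (e k) ξ (e i) * G (e k) ξ (e i)) := by
          refine Finset.sum_congr rfl fun i _ => Finset.sum_congr rfl fun k _ => ?_
          rw [bsym, basym]; ring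
      _ = -∑ i, ∑ k, F (e k) ξ (e i) * G (e k) ξ (e i) := by
          simp only [Finset.sum_neg_distrib]
      _ = -∑ i, ∑ k, F (e i) ξ (e k) * G (e i) ξ (e k) := by
          rw [Finset.sum_comm]
  rw [hred]
  have : (∑ i, ∑ k, F (e i) ξ (e k) * G (e i) ξ (e k)) = 0 := by linarith
  rw [this]; ring

end Helpers4
theorem stmt13 (n : ℕ) (φ : V →ₗ[ℝ] V) (ξ : V) (η : V →ₗ[ℝ] ℝ)
    (hacm : ACM n φ ξ η) (e : OrthonormalBasis (Fin (2 * n + 1)) ℝ V) :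
    (∀ F, MemN φ ξ η F → MemN φ ξ η (L5 ξ η F)) ∧
    (∀ F, MemNt φ ξ η F → MemNt φ ξ η (L5 ξ η F)) ∧
    (∀ (a : ℝ) (F G : V → V → V → ℝ),
      L5 ξ η (fun x y z => a * F x y z + G x y z) =
        fun x y z => a * L5 ξ η F x y z + L5 ξ η G x y z) ∧
    (∀ F, MemN φ ξ η F → L5 ξ η (L5 ξ η F) = F) ∧
    (∀ F, MemNt φ ξ η F → L5 ξ η (L5 ξ η F) = F) ∧
    (∀ F G, MemN φ ξ η F → MemN φ ξ η G →
      innerF e (L5 ξ η F) (L5 ξ η G) = innerF e F G) ∧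
    (∀ F G, MemNt φ ξ η F → MemNt φ ξ η G →
      innerF e (L5 ξ η F) (L5 ξ η G) = innerF e F G) ∧
    (∀ A : V ≃ₗᵢ[ℝ] V, (∀ x, A (φ x) = φ (A x)) → A ξ = ξ →
      ∀ F, MemVF' φ ξ η F → L5 ξ η (actA A F) = actA A (L5 ξ η F)) ∧
    (∀ F, MemN φ ξ η F →
      (L5 ξ η F = -F ↔ MemQS φ ξ η F) ∧ (L5 ξ η F = F ↔ MemQK φ ξ η F)) ∧
    (∀ F, MemNt φ ξ η F →
      (L5 ξ η F = -F ↔ MemF6sub φ ξ η F) ∧ (L5 ξ η F = F ↔ MemF7sub φ ξ η F)) ∧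
    (∀ F, MemN φ ξ η F →
      MemQS φ ξ η (fun x y z => (1 / 4) * (F2 ξ η F x y z + F4 φ ξ η F x y z +
        F5 ξ η F x y z + F6 φ ξ η F x y z)) ∧
      MemQK φ ξ η (fun x y z => (1 / 4) * (F2 ξ η F x y z + F4 φ ξ η F x y z -
        F5 ξ η F x y z - F6 φ ξ η F x y z)) ∧
      ∀ x y z, F x y z =
        (1 / 4) * (F2 ξ η F x y z + F4 φ ξ η F x y z +
          F5 ξ η F x y z + F6 φ ξ η F x y z) +
        (1 / 4) * (F2 ξ η F x y z + F4 φ ξ η F x y z -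
          F5 ξ η F x y z - F6 φ ξ η F x y z)) ∧
    (∀ F, MemNt φ ξ η F →
      MemF6sub φ ξ η (fun x y z => (1 / 4) * (F2 ξ η F x y z - F4 φ ξ η F x y z +
        F5 ξ η F x y z - F6 φ ξ η F x y z)) ∧
      MemF7sub φ ξ η (fun x y z => (1 / 4) * (F2 ξ η F x y z - F4 φ ξ η F x y z -
        F5 ξ η F x y z + F6 φ ξ η F x y z)) ∧
      ∀ x y z, F x y z =
        (1 / 4) * (F2 ξ η F x y z - F4 φ ξ η F x y z +
          F5 ξ η F x y z - F6 φ ξ η F x y z) +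
        (1 / 4) * (F2 ξ η F x y z - F4 φ ξ η F x y z -
          F5 ξ η F x y z + F6 φ ξ η F x y z)) ∧
    (∀ F, MemN φ ξ η F →
      ∃! p : (V → V → V → ℝ) × (V → V → V → ℝ),
        MemQS φ ξ η p.1 ∧ MemQK φ ξ η p.2 ∧ F = p.1 + p.2) ∧
    (∀ F, MemNt φ ξ η F →
      ∃! p : (V → V → V → ℝ) × (V → V → V → ℝ),
        MemF6sub φ ξ η p.1 ∧ MemF7sub φ ξ η p.2 ∧ F = p.1 + p.2) ∧
    (∀ F G, MemQS φ ξ η F → MemQK φ ξ η G → innerF e F G = 0) ∧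
    (∀ F G, MemF6sub φ ξ η F → MemF7sub φ ξ η G → innerF e F G = 0) := by
  refine ⟨fun F hN => L5_memN hacm hN, fun F hN => L5_memNt hacm hN, ?_, ?_, ?_, ?_, ?_, ?_,
    ?_, ?_, ?_, ?_, ?_, ?_, ?_, ?_⟩
  · -- linearity
    intro a F G
    funext x y z
    simp only [L5, F5]
    ring
  · -- involution on N
    exact fun F hN => L5_invol hacm hN.1
  · -- involution on Nt
    exact fun F hN => L5_invol hacm hN.1
  · -- isometry on N
    intro F G hFm hGm
    have hvF := L5_B hacm hFm.1
    have hvG := L5_B hacm hGm.1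
    rw [inner_red hacm e (L5_memVF' hacm hFm.1) (L5_memVF' hacm hGm.1),
      inner_red hacm e hFm.1 hGm.1]
    congr 1
    calc (∑ i, ∑ k, L5 ξ η F (e i) ξ (e k) * L5 ξ η G (e i) ξ (e k))
        = ∑ i, ∑ k, F (e k) ξ (e i) * G (e k) ξ (e i) := by
          refine Finset.sum_congr rfl fun i _ => Finset.sum_congr rfl fun k _ => ?_
          rw [hvF, hvG]; ring
      _ = _ := Finset.sum_comm
  · -- isometry on Nt
    intro F G hFm hGm
    have hvF := L5_B hacm hFm.1
    have hvG := L5_B hacm hGm.1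
    rw [inner_red hacm e (L5_memVF' hacm hFm.1) (L5_memVF' hacm hGm.1),
      inner_red hacm e hFm.1 hGm.1]
    congr 1
    calc (∑ i, ∑ k, L5 ξ η F (e i) ξ (e k) * L5 ξ η G (e i) ξ (e k))
        = ∑ i, ∑ k, F (e k) ξ (e i) * G (e k) ξ (e i) := by
          refine Finset.sum_congr rfl fun i _ => Finset.sum_congr rfl fun k _ => ?_
          rw [hvF, hvG]; ring
      _ = _ := Finset.sum_comm
  · -- commuting with actA
    intro A hAφ hAξ F hVF
    have hsymm : A.symm ξ = ξ := by
      rw [← hAξ, LinearIsometryEquiv.symm_apply_apply, hAξ]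
    have hηs : ∀ u, η (A.symm u) = η u := by
      intro u
      calc η (A.symm u) = ⟪A.symm u, ξ⟫ := eta_inner hacm _
        _ = ⟪A.symm u, A.symm ξ⟫ := by rw [hsymm]
        _ = ⟪u, ξ⟫ := A.symm.inner_map_map u ξ
        _ = η u := (eta_inner hacm u).symm
    funext x y z
    simp only [L5, F5, actA]
    rw [hsymm, hηs, hηs]
  · -- eigenspace characterization on N
    intro F hN
    constructor
    · constructor
      · intro hL
        refine ⟨hN.1, hN.2, ?_⟩
        funext x y z
        have h0 := app3 hL x y z
        simp only [L5, Pi.neg_apply] at h0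
        linarith
      · intro hQ
        funext x y z
        have h0 := app3 hQ.2.2 x y z
        simp only [L5, Pi.neg_apply]
        linarith
    · constructor
      · intro hL
        refine ⟨hN.1, hN.2, ?_⟩
        funext x y z
        have h0 := app3 hL x y z
        simp only [L5, Pi.neg_apply] at h0 ⊢
        linarith
      · intro hQ
        funext x y z
        have h0 := app3 hQ.2.2 x y z
        simp only [L5, Pi.neg_apply] at h0 ⊢
        linarith
  · -- eigenspace characterization on Nt
    intro F hN
    constructor
    · constructor
      · intro hL
        refine ⟨hN.1, hN.2, ?_⟩
        funext x y z
        have h0 := app3 hL x y z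
        simp only [L5, Pi.neg_apply] at h0
        linarith
      · intro hQ
        funext x y z
        have h0 := app3 hQ.2.2 x y z
        simp only [L5, Pi.neg_apply]
        linarith
    · constructor
      · intro hL
        refine ⟨hN.1, hN.2, ?_⟩
        funext x y z
        have h0 := app3 hL x y z
        simp only [L5, Pi.neg_apply] at h0 ⊢
        linarith
      · intro hQ
        funext x y z
        have h0 := app3 hQ.2.2 x y z
        simp only [L5, Pi.neg_apply] at h0 ⊢
        linarith
  · -- projections on N
    intro F hN
    have hb4 := b4 hacm hN.1.1.1 hN.2
    refine ⟨?_, ?_, ?_⟩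
    · rw [hP_N hacm hN]; exact comb_memQS hacm hN
    · rw [hQ_N hacm hN]; exact comb_memQK hacm hN
    · intro x y z
      simp only [F2, F4, F5, F6]
      rw [hb4 x z, hb4 x y, hb4 z x, hb4 y x, rep hacm hN.1 x y z]
      ring
  · -- projections on Nt
    intro F hN
    have hb4 := b4neg hacm hN.1.1.1 hN.2
    refine ⟨?_, ?_, ?_⟩
    · rw [hP_Nt hacm hN]; exact comb_memF6 hacm hN
    · rw [hQ_Nt hacm hN]; exact comb_memF7 hacm hN
    · intro x y z
      simp only [F2, F4, F5, F6]
      rw [hb4 x z, hb4 x y, hb4 z x, hb4 y x, rep hacm hN.1 x y z]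
      ring
  · -- unique decomposition on N
    intro F hN
    have hsum : F = (fun x y z => (1 / 2) * F x y z + (-(1 / 2)) * L5 ξ η F x y z)
        + (fun x y z => (1 / 2) * F x y z + (1 / 2) * L5 ξ η F x y z) := by
      funext x y z
      simp only [Pi.add_apply]
      ring
    refine ⟨⟨_, _⟩, ⟨comb_memQS hacm hN, comb_memQK hacm hN, hsum⟩, ?_⟩
    rintro ⟨q1, q2⟩ ⟨h1, h2, h3⟩
    obtain ⟨e1, e2⟩ := uniq_decomp h1.2.2 h2.2.2 (comb_memQS hacm hN).2.2
      (comb_memQK hacm hN).2.2 h3 hsum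
    simp only [Prod.mk.injEq]
    exact ⟨e1, e2⟩
  · -- unique decomposition on Nt
    intro F hN
    have hsum : F = (fun x y z => (1 / 2) * F x y z + (-(1 / 2)) * L5 ξ η F x y z)
        + (fun x y z => (1 / 2) * F x y z + (1 / 2) * L5 ξ η F x y z) := by
      funext x y z
      simp only [Pi.add_apply]
      ring
    refine ⟨⟨_, _⟩, ⟨comb_memF6 hacm hN, comb_memF7 hacm hN, hsum⟩, ?_⟩
    rintro ⟨q1, q2⟩ ⟨h1, h2, h3⟩
    obtain ⟨e1, e2⟩ := uniq_decomp h1.2.2 h2.2.2 (comb_memF6 hacm hN).2.2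
      (comb_memF7 hacm hN).2.2 h3 hsum
    simp only [Prod.mk.injEq]
    exact ⟨e1, e2⟩
  · -- orthogonality QS/QK
    intro F G hF hG
    exact orth_gen hacm e hF.1 hG.1 hF.2.2 hG.2.2
  · -- orthogonality F6/F7
    intro F G hF hG
    exact orth_gen hacm e hF.1 hG.1 hF.2.2 hG.2.2
end
end

section
/- The map L₆(F) = F − 2F₇(F) is an involutive linear isometry of 𝒬𝒮𝔽 = {F ∈ (v𝔽)′ : F = F₄(F) = F₅(F)}, commuting with the action on 𝔽 of every linear isometry A of V with A∘φ = φ∘A and Aξ = ξ, and it yields the orthogonal decomposition 𝒬𝒮𝔽 = 𝔽₂ ⊕ 𝔽₄, where 𝔽₂ = {F ∈ 𝔽 : F = F₇(F)} is the (−1)-eigenspace and 𝔽₄ = {F ∈ 𝔽 : F = F₄(F) = F₅(F) and f(F)(ξ) = 0} is the (+1)-eigenspace; the components of F ∈ 𝒬𝒮𝔽 in 𝔽₂ and 𝔽₄ are F₇(F) and (1/4){F₂(F)+F₄(F)+F₅(F)+F₆(F)−4F₇(F)}. -/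
open scoped BigOperators RealInnerProductSpace

noncomputable section

variable {V : Type*} [NormedAddCommGroup V] [InnerProductSpace ℝ V]

lemma aux_eta_xi {φ : V →ₗ[ℝ] V} {ξ : V} {η : V →ₗ[ℝ] ℝ}
    (hφφ : ∀ x, φ (φ x) = -x + η x • ξ) (hφξ : φ ξ = 0)
    (hξξ : ⟪ξ, ξ⟫ = 1) : η ξ = 1 := by
  have h := hφφ ξ
  rw [hφξ, map_zero] at h
  have h2 := congrArg (fun v : V => (⟪v, ξ⟫ : ℝ)) h.symm
  simp only [inner_add_left, inner_neg_left, real_inner_smul_left, hξξ, inner_zero_left] at h2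
  linarith

lemma aux_eta {φ : V →ₗ[ℝ] V} {ξ : V} {η : V →ₗ[ℝ] ℝ}
    (hφφ : ∀ x, φ (φ x) = -x + η x • ξ) (hφξ : φ ξ = 0)
    (hξξ : ⟪ξ, ξ⟫ = 1)
    (hg : ∀ x y, ⟪φ x, φ y⟫ = ⟪x, y⟫ - η x * η y) (x : V) : η x = ⟪x, ξ⟫ := by
  have h := hg x ξ
  rw [hφξ, inner_zero_right, aux_eta_xi hφφ hφξ hξξ] at h
  linarith

lemma aux_sumL {ι : Type*} [Fintype ι] (e : OrthonormalBasis ι ℝ V)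
    (L : V → ℝ) (hL : IsLinearMap ℝ L) (v : V) :
    ∑ i, ⟪v, e i⟫ * L (e i) = L v := by
  calc ∑ i, ⟪v, e i⟫ * L (e i)
      = ∑ i, (IsLinearMap.mk' L hL) ((⟪e i, v⟫ : ℝ) • e i) := by
        refine Finset.sum_congr rfl fun i _ => ?_
        rw [map_smul, smul_eq_mul, real_inner_comm]; rfl
    _ = (IsLinearMap.mk' L hL) (∑ i, (⟪e i, v⟫ : ℝ) • e i) := (map_sum _ _ _).symm
    _ = L v := by rw [e.sum_repr']; rfl

lemma aux_IP {ι : Type*} [Fintype ι] (e : OrthonormalBasis ι ℝ V)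
    {ξ : V} {η : V →ₗ[ℝ] ℝ} (hη : ∀ x, η x = ⟪x, ξ⟫)
    (H : V → V → V → ℝ) (hT : Trilinear H) (hA : ∀ x y z, H x y z = -H x z y) (a : ℝ) :
    ∑ i, ∑ j, ∑ k, (a * (η (e k) * ⟪e i, e j⟫ - η (e j) * ⟪e i, e k⟫)) *
      H (e i) (e j) (e k) = 2 * a * fTr e H ξ := by
  have h1 : ∀ (L : V → ℝ), IsLinearMap ℝ L → ∑ k, η (e k) * L (e k) = L ξ := by
    intro L hL
    rw [← aux_sumL e L hL ξ]
    exact Finset.sum_congr rfl fun k _ => by rw [hη, real_inner_comm]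
  have hk : ∀ i j, ∑ k, (a * (η (e k) * ⟪e i, e j⟫ - η (e j) * ⟪e i, e k⟫)) *
      H (e i) (e j) (e k)
      = a * ⟪e i, e j⟫ * H (e i) (e j) ξ - a * η (e j) * H (e i) (e j) (e i) := by
    intro i j
    rw [← h1 _ (hT.2.2 (e i) (e j)), ← aux_sumL e (H (e i) (e j)) (hT.2.2 (e i) (e j)) (e i),
      Finset.mul_sum, Finset.mul_sum, ← Finset.sum_sub_distrib]
    exact Finset.sum_congr rfl fun k _ => by ring
  have hj : ∀ i, ∑ j, (a * ⟪e i, e j⟫ * H (e i) (e j) ξ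
      - a * η (e j) * H (e i) (e j) (e i)) = 2 * a * H (e i) (e i) ξ := by
    intro i
    have e1 : ∑ j, ⟪e i, e j⟫ * H (e i) (e j) ξ = H (e i) (e i) ξ :=
      aux_sumL e (fun y => H (e i) y ξ) (hT.2.1 (e i) ξ) (e i)
    have e2 : ∑ j, η (e j) * H (e i) (e j) (e i) = H (e i) ξ (e i) :=
      h1 (fun y => H (e i) y (e i)) (hT.2.1 (e i) (e i))
    have e3 : H (e i) ξ (e i) = -H (e i) (e i) ξ := by rw [hA (e i) ξ (e i)]
    rw [Finset.sum_sub_distrib]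
    have e4 : ∑ j, a * ⟪e i, e j⟫ * H (e i) (e j) ξ = a * H (e i) (e i) ξ := by
      rw [← e1, Finset.mul_sum]; exact Finset.sum_congr rfl fun j _ => by ring
    have e5 : ∑ j, a * η (e j) * H (e i) (e j) (e i) = a * H (e i) ξ (e i) := by
      rw [← e2, Finset.mul_sum]; exact Finset.sum_congr rfl fun j _ => by ring
    rw [e4, e5, e3]; ring
  calc ∑ i, ∑ j, ∑ k, (a * (η (e k) * ⟪e i, e j⟫ - η (e j) * ⟪e i, e k⟫)) *
        H (e i) (e j) (e k)
      = ∑ i, (2 * a * H (e i) (e i) ξ) := by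
        refine Finset.sum_congr rfl fun i _ => ?_
        rw [show (∑ j, ∑ k, (a * (η (e k) * ⟪e i, e j⟫ - η (e j) * ⟪e i, e k⟫)) *
          H (e i) (e j) (e k)) = ∑ j, (a * ⟪e i, e j⟫ * H (e i) (e j) ξ
          - a * η (e j) * H (e i) (e j) (e i)) from
          Finset.sum_congr rfl fun j _ => hk i j, hj i]
    _ = 2 * a * fTr e H ξ := by rw [fTr, Finset.mul_sum]

lemma aux_trace {ι : Type*} [Fintype ι] (e f : OrthonormalBasis ι ℝ V)
    (B : V → V → ℝ) (h1 : ∀ y, IsLinearMap ℝ fun x => B x y)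
    (h2 : ∀ x, IsLinearMap ℝ (B x)) :
    ∑ i, B (f i) (f i) = ∑ i, B (e i) (e i) := by
  have step : ∀ i, B (f i) (f i) = ∑ j, ⟪f i, e j⟫ * B (f i) (e j) := fun i =>
    (aux_sumL e (B (f i)) (h2 (f i)) (f i)).symm
  calc ∑ i, B (f i) (f i) = ∑ i, ∑ j, ⟪f i, e j⟫ * B (f i) (e j) :=
        Finset.sum_congr rfl fun i _ => step i
    _ = ∑ j, ∑ i, ⟪e j, f i⟫ * B (f i) (e j) := by
        rw [Finset.sum_comm]
        exact Finset.sum_congr rfl fun j _ => Finset.sum_congr rfl fun i _ => by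
          rw [real_inner_comm]
    _ = ∑ j, B (e j) (e j) := Finset.sum_congr rfl fun j _ =>
        aux_sumL f (fun x => B x (e j)) (h1 (e j)) (e j)

set_option maxHeartbeats 1000000 in
theorem stmt14 (n : ℕ) (φ : V →ₗ[ℝ] V) (ξ : V) (η : V →ₗ[ℝ] ℝ)
    (hacm : ACM n φ ξ η) (hn : 1 ≤ n) (e : OrthonormalBasis (Fin (2 * n + 1)) ℝ V) :
    (∀ F, MemQS φ ξ η F → MemQS φ ξ η (L6 n e ξ η F)) ∧
    (∀ (a : ℝ) (F G : V → V → V → ℝ),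
      L6 n e ξ η (fun x y z => a * F x y z + G x y z) =
        fun x y z => a * L6 n e ξ η F x y z + L6 n e ξ η G x y z) ∧
    (∀ F, MemQS φ ξ η F → L6 n e ξ η (L6 n e ξ η F) = F) ∧
    (∀ F G, MemQS φ ξ η F → MemQS φ ξ η G →
      innerF e (L6 n e ξ η F) (L6 n e ξ η G) = innerF e F G) ∧
    (∀ A : V ≃ₗᵢ[ℝ] V, (∀ x, A (φ x) = φ (A x)) → A ξ = ξ →
      ∀ F, MemQS φ ξ η F → L6 n e ξ η (actA A F) = actA A (L6 n e ξ η F)) ∧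
    (∀ F, MemQS φ ξ η F →
      (L6 n e ξ η F = -F ↔ MemF2sub n e φ ξ η F) ∧
      (L6 n e ξ η F = F ↔ MemF4sub n e φ ξ η F)) ∧
    (∀ F, MemQS φ ξ η F →
      MemF2sub n e φ ξ η (F7 n e ξ η F) ∧
      MemF4sub n e φ ξ η (fun x y z => (1 / 4) * (F2 ξ η F x y z +
        F4 φ ξ η F x y z + F5 ξ η F x y z + F6 φ ξ η F x y z -
        4 * F7 n e ξ η F x y z)) ∧
      ∀ x y z, F x y z = F7 n e ξ η F x y z +
        (1 / 4) * (F2 ξ η F x y z + F4 φ ξ η F x y z + F5 ξ η F x y z +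
          F6 φ ξ η F x y z - 4 * F7 n e ξ η F x y z)) ∧
    (∀ F, MemQS φ ξ η F →
      ∃! p : (V → V → V → ℝ) × (V → V → V → ℝ),
        MemF2sub n e φ ξ η p.1 ∧ MemF4sub n e φ ξ η p.2 ∧ F = p.1 + p.2) ∧
    (∀ F G, MemF2sub n e φ ξ η F → MemF4sub n e φ ξ η G → innerF e F G = 0) := by
  obtain ⟨hdim, hφφ, hφξ, hηφ, hξξ, hg⟩ := hacm
  have hη : ∀ x, η x = ⟪x, ξ⟫ := aux_eta hφφ hφξ hξξ hg
  have hηξ : η ξ = 1 := aux_eta_xi hφφ hφξ hξξ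
  have hinξ : ∀ x : V, (⟪x, ξ⟫ : ℝ) = η x := fun x => (hη x).symm
  have hinξ' : ∀ x : V, (⟪ξ, x⟫ : ℝ) = η x := fun x => by rw [real_inner_comm, hinξ]
  have hnR : (n : ℝ) ≠ 0 := by
    have : (0 : ℝ) < (n : ℝ) := by exact_mod_cast Nat.lt_of_lt_of_le Nat.zero_lt_one hn
    linarith
  have horth : ∀ i j, (⟪e i, e j⟫ : ℝ) = if i = j then 1 else 0 := by
    have := e.orthonormal
    rw [orthonormal_iff_ite] at this
    exact this
  have cf3 : ∀ {A B : V → V → V → ℝ}, A = B → ∀ x y z, A x y z = B x y z :=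
    fun h x y z => by rw [h]
  have hmapx : ∀ x, hMap φ x = x - η x • ξ := by
    intro x
    rw [hMap, hφφ x]
    abel
  have hηh : ∀ x, η (hMap φ x) = 0 := by
    intro x
    rw [hmapx, map_sub, map_smul, smul_eq_mul, hηξ, mul_one, sub_self]
  -- trace of F7
  have hsum1 : ∑ i, (⟪e i, e i⟫ : ℝ) = 2 * (n : ℝ) + 1 := by
    have : ∀ i, (⟪e i, e i⟫ : ℝ) = 1 := fun i => by rw [horth, if_pos rfl]
    rw [Finset.sum_congr rfl fun i _ => this i, Finset.sum_const, Finset.card_univ,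
      Fintype.card_fin, nsmul_eq_mul]
    push_cast
    ring
  have hsum2 : ∑ i, η (e i) * (⟪e i, ξ⟫ : ℝ) = 1 := by
    have h := e.sum_inner_mul_inner ξ ξ
    rw [hξξ] at h
    rw [← h]
    exact Finset.sum_congr rfl fun i _ => by rw [hη, real_inner_comm (e i) ξ]
  have hF7tr : ∀ F : V → V → V → ℝ, fTr e (F7 n e ξ η F) ξ = fTr e F ξ := by
    intro F
    have : fTr e (F7 n e ξ η F) ξ =
        ∑ i, 1 / (2 * (n : ℝ)) * fTr e F ξ * (η ξ * ⟪e i, e i⟫ - η (e i) * ⟪e i, ξ⟫) := rfl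
    rw [this]
    simp only [hηξ, one_mul]
    rw [← Finset.mul_sum, Finset.sum_sub_distrib, hsum1, hsum2]
    field_simp
    ring
  -- pointwise lemmas about F7
  have hF7xi : ∀ (F : V → V → V → ℝ) y z, F7 n e ξ η F ξ y z = 0 := by
    intro F y z
    simp only [F7, hinξ']
    ring
  have hF7h : ∀ (F : V → V → V → ℝ) x y z,
      F7 n e ξ η F (hMap φ x) (hMap φ y) (hMap φ z) = 0 := by
    intro F x y z
    simp only [F7, hηh, zero_mul, sub_zero, sub_self, mul_zero]
  have hF7F4 : ∀ F : V → V → V → ℝ, F4 φ ξ η (F7 n e ξ η F) = F7 n e ξ η F := by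
    intro F
    funext x y z
    simp only [F4, F7, hηφ, hηξ, hinξ, hg, one_mul, zero_mul, mul_zero]
    ring
  have hF7F5 : ∀ F : V → V → V → ℝ, F5 ξ η (F7 n e ξ η F) = F7 n e ξ η F := by
    intro F
    funext x y z
    simp only [F5, F7, hinξ, hηξ, one_mul]
    rw [real_inner_comm z x, real_inner_comm y x]
    ring
  have hF7InF : ∀ F : V → V → V → ℝ, InF φ ξ η (F7 n e ξ η F) := by
    intro F
    refine ⟨⟨fun y z => ⟨fun u v => ?_, fun r u => ?_⟩,
      fun x z => ⟨fun u v => ?_, fun r u => ?_⟩,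
      fun x y => ⟨fun u v => ?_, fun r u => ?_⟩⟩, fun x y z => ?_, fun x y z => ?_⟩
    · show F7 n e ξ η F (u + v) y z = F7 n e ξ η F u y z + F7 n e ξ η F v y z
      simp only [F7, inner_add_left]
      ring
    · show F7 n e ξ η F (r • u) y z = r • F7 n e ξ η F u y z
      simp only [F7, real_inner_smul_left, smul_eq_mul]
      ring
    · show F7 n e ξ η F x (u + v) z = F7 n e ξ η F x u z + F7 n e ξ η F x v z
      simp only [F7, inner_add_right, map_add]
      ring
    · show F7 n e ξ η F x (r • u) z = r • F7 n e ξ η F x u z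
      simp only [F7, real_inner_smul_right, map_smul, smul_eq_mul]
      ring
    · show F7 n e ξ η F x y (u + v) = F7 n e ξ η F x y u + F7 n e ξ η F x y v
      simp only [F7, inner_add_right, map_add]
      ring
    · show F7 n e ξ η F x y (r • u) = r • F7 n e ξ η F x y u
      simp only [F7, real_inner_smul_right, map_smul, smul_eq_mul]
      ring
    · simp only [F7]; ring
    · simp only [F7, hηφ, hηξ, hinξ, one_mul, zero_mul, mul_zero]
      ring
  -- closure of InF under linear combinations
  have InF_comb : ∀ (c : ℝ) (F G : V → V → V → ℝ), InF φ ξ η F → InF φ ξ η G →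
      InF φ ξ η (fun x y z => F x y z + c * G x y z) := by
    intro c F G hFm hGm
    obtain ⟨⟨f1, f2, f3⟩, fa, fc⟩ := hFm
    obtain ⟨⟨g1, g2, g3⟩, ga, gc⟩ := hGm
    refine ⟨⟨fun y z => ⟨fun u v => ?_, fun r u => ?_⟩,
      fun x z => ⟨fun u v => ?_, fun r u => ?_⟩,
      fun x y => ⟨fun u v => ?_, fun r u => ?_⟩⟩, fun x y z => ?_, fun x y z => ?_⟩
    · show F (u + v) y z + c * G (u + v) y z = _
      have a1 : F (u + v) y z = F u y z + F v y z := (f1 y z).map_add u v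
      have a2 : G (u + v) y z = G u y z + G v y z := (g1 y z).map_add u v
      rw [a1, a2]; ring
    · show F (r • u) y z + c * G (r • u) y z = _
      have a1 : F (r • u) y z = r • F u y z := (f1 y z).map_smul r u
      have a2 : G (r • u) y z = r • G u y z := (g1 y z).map_smul r u
      rw [a1, a2]; simp only [smul_eq_mul]; ring
    · show F x (u + v) z + c * G x (u + v) z = _
      have a1 : F x (u + v) z = F x u z + F x v z := (f2 x z).map_add u v
      have a2 : G x (u + v) z = G x u z + G x v z := (g2 x z).map_add u v
      rw [a1, a2]; ring
    · show F x (r • u) z + c * G x (r • u) z = _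
      have a1 : F x (r • u) z = r • F x u z := (f2 x z).map_smul r u
      have a2 : G x (r • u) z = r • G x u z := (g2 x z).map_smul r u
      rw [a1, a2]; simp only [smul_eq_mul]; ring
    · show F x y (u + v) + c * G x y (u + v) = _
      have a1 : F x y (u + v) = F x y u + F x y v := (f3 x y).map_add u v
      have a2 : G x y (u + v) = G x y u + G x y v := (g3 x y).map_add u v
      rw [a1, a2]; ring
    · show F x y (r • u) + c * G x y (r • u) = _
      have a1 : F x y (r • u) = r • F x y u := (f3 x y).map_smul r u
      have a2 : G x y (r • u) = r • G x y u := (g3 x y).map_smul r u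
      rw [a1, a2]; simp only [smul_eq_mul]; ring
    · show F x y z + c * G x y z = -(F x z y + c * G x z y)
      rw [fa x y z, ga x y z]; ring
    · show F x y z + c * G x y z = -(F x (φ y) (φ z) + c * G x (φ y) (φ z))
        + η y * (F x ξ z + c * G x ξ z) + η z * (F x y ξ + c * G x y ξ)
      rw [fc x y z, gc x y z]; ring
  -- structural facts for F in QS
  have hstruct : ∀ F : V → V → V → ℝ, MemQS φ ξ η F →
      ∀ x y z, F x y z = η y * F x ξ z - η z * F x ξ y := by
    intro F hQS x y z
    obtain ⟨⟨⟨hT, hA, _⟩, hhF, hxi⟩, _, _⟩ := hQS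
    have h00 : ∀ w, F w ξ ξ = 0 := fun w => by have := hA w ξ ξ; linarith
    have h0 := cf3 hhF x y z
    simp only [hF, Pi.zero_apply] at h0
    rw [hmapx, hmapx, hmapx] at h0
    have l1 : F (x - η x • ξ) (y - η y • ξ) (z - η z • ξ)
        = F x (y - η y • ξ) (z - η z • ξ) - η x * F ξ (y - η y • ξ) (z - η z • ξ) := by
      rw [(hT.1 _ _).map_sub, (hT.1 _ _).map_smul, smul_eq_mul]
    rw [l1, hxi, mul_zero, sub_zero] at h0
    have l2 : F x (y - η y • ξ) (z - η z • ξ)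
        = F x y (z - η z • ξ) - η y * F x ξ (z - η z • ξ) := by
      rw [(hT.2.1 _ _).map_sub, (hT.2.1 _ _).map_smul, smul_eq_mul]
    rw [l2] at h0
    have l3 : F x y (z - η z • ξ) = F x y z - η z * F x y ξ := by
      rw [(hT.2.2 _ _).map_sub, (hT.2.2 _ _).map_smul, smul_eq_mul]
    have l4 : F x ξ (z - η z • ξ) = F x ξ z - η z * F x ξ ξ := by
      rw [(hT.2.2 _ _).map_sub, (hT.2.2 _ _).map_smul, smul_eq_mul]
    rw [l3, l4, h00, mul_zero, sub_zero, hA x y ξ] at h0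
    linarith
  have hBsym : ∀ F : V → V → V → ℝ, MemQS φ ξ η F → ∀ x z, F x ξ z = F z ξ x := by
    intro F hQS x z
    obtain ⟨⟨_, _, hxi⟩, _, h5⟩ := hQS
    have h := cf3 h5 x ξ z
    simp only [F5, hηξ, one_mul, hxi, mul_zero, sub_zero] at h
    exact h
  have hBphi : ∀ F : V → V → V → ℝ, MemQS φ ξ η F → ∀ x z, F (φ x) ξ (φ z) = F x ξ z := by
    intro F hQS x z
    obtain ⟨⟨⟨hT, _, _⟩, _, _⟩, h4, _⟩ := hQS
    have h := cf3 h4 x ξ z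
    have h0 : F (φ x) ξ (φ ξ) = 0 := by rw [hφξ]; exact (hT.2.2 _ _).map_zero
    simp only [F4, hηξ, one_mul, h0, mul_zero, sub_zero] at h
    exact h.symm
  have hF6eq : ∀ F : V → V → V → ℝ, MemQS φ ξ η F →
      ∀ x y z, F6 φ ξ η F x y z = F x y z := by
    intro F hQS x y z
    simp only [F6]
    rw [hBsym F hQS (φ z) (φ x), hBsym F hQS (φ y) (φ x), hBphi F hQS x z,
      hBphi F hQS x y, ← hstruct F hQS]
  -- inner product key lemmas
  have icomm : ∀ H K : V → V → V → ℝ, innerF e H K = innerF e K H := by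
    intro H K
    refine Finset.sum_congr rfl fun i _ => Finset.sum_congr rfl fun j _ =>
      Finset.sum_congr rfl fun k _ => mul_comm _ _
  have keyF7 : ∀ (F H : V → V → V → ℝ), Trilinear H → (∀ x y z, H x y z = -H x z y) →
      innerF e (F7 n e ξ η F) H = 2 * (1 / (2 * (n : ℝ)) * fTr e F ξ) * fTr e H ξ := by
    intro F H hT hA
    exact aux_IP e hη H hT hA (1 / (2 * (n : ℝ)) * fTr e F ξ)
  have expand : ∀ F G : V → V → V → ℝ,
      innerF e (L6 n e ξ η F) (L6 n e ξ η G) =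
        innerF e F G - 2 * innerF e F (F7 n e ξ η G) - 2 * innerF e (F7 n e ξ η F) G
          + 4 * innerF e (F7 n e ξ η F) (F7 n e ξ η G) := by
    intro F G
    simp only [innerF, L6, Finset.mul_sum, ← Finset.sum_sub_distrib, ← Finset.sum_add_distrib]
    refine Finset.sum_congr rfl fun i _ => Finset.sum_congr rfl fun j _ =>
      Finset.sum_congr rfl fun k _ => by ring
  -- G component membership
  have hGmem : ∀ F : V → V → V → ℝ, MemQS φ ξ η F →
      MemF4sub n e φ ξ η (fun x y z => F x y z - F7 n e ξ η F x y z) := by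
    intro F hQS
    obtain ⟨⟨hInF, hhF, hxi⟩, h4, h5⟩ := hQS
    refine ⟨?_, ?_, ?_, ?_⟩
    · have hfun : (fun x y z => F x y z - F7 n e ξ η F x y z)
          = fun x y z => F x y z + (-1) * F7 n e ξ η F x y z := by
        funext x y z; ring
      rw [hfun]
      exact InF_comb (-1) F _ hInF (hF7InF F)
    · funext x y z
      show F x y z - F7 n e ξ η F x y z = η y * (F (φ x) ξ (φ z) - F7 n e ξ η F (φ x) ξ (φ z))
        - η z * (F (φ x) ξ (φ y) - F7 n e ξ η F (φ x) ξ (φ y))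
      have a1 := cf3 h4 x y z
      have a2 := cf3 (hF7F4 F) x y z
      simp only [F4] at a1 a2
      rw [a1, ← a2]
      ring
    · funext x y z
      show F x y z - F7 n e ξ η F x y z = η y * (F z ξ x - F7 n e ξ η F z ξ x)
        - η z * (F y ξ x - F7 n e ξ η F y ξ x)
      have a1 := cf3 h5 x y z
      have a2 := cf3 (hF7F5 F) x y z
      simp only [F5] at a1 a2
      rw [a1, ← a2]
      ring
    · show (∑ i, (F (e i) (e i) ξ - F7 n e ξ η F (e i) (e i) ξ)) = 0
      rw [Finset.sum_sub_distrib]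
      have h := hF7tr F
      simp only [fTr] at h
      rw [h, sub_self]
  refine ⟨?b1, ?b2, ?b3, ?b4, ?b5, ?b6, ?b7, ?b8, ?b9⟩
  case b1 =>
    intro F hQS
    obtain ⟨⟨hInF, hhF, hxi⟩, h4, h5⟩ := hQS
    refine ⟨⟨?_, ?_, ?_⟩, ?_, ?_⟩
    · have hfun : L6 n e ξ η F = fun x y z => F x y z + (-2) * F7 n e ξ η F x y z := by
        funext x y z; simp only [L6]; ring
      rw [hfun]
      exact InF_comb (-2) F _ hInF (hF7InF F)
    · funext x y z
      show L6 n e ξ η F (hMap φ x) (hMap φ y) (hMap φ z) = 0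
      have h0 := cf3 hhF x y z
      simp only [hF, Pi.zero_apply] at h0
      simp only [L6]
      rw [h0, hF7h]
      ring
    · intro y z
      show F ξ y z - 2 * F7 n e ξ η F ξ y z = 0
      rw [hxi, hF7xi]
      ring
    · funext x y z
      show L6 n e ξ η F x y z = η y * L6 n e ξ η F (φ x) ξ (φ z)
        - η z * L6 n e ξ η F (φ x) ξ (φ y)
      have a1 := cf3 h4 x y z
      have a2 := cf3 (hF7F4 F) x y z
      simp only [F4] at a1 a2
      simp only [L6]
      rw [a1, ← a2]
      ring
    · funext x y z
      show L6 n e ξ η F x y z = η y * L6 n e ξ η F z ξ x - η z * L6 n e ξ η F y ξ x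
      have a1 := cf3 h5 x y z
      have a2 := cf3 (hF7F5 F) x y z
      simp only [F5] at a1 a2
      simp only [L6]
      rw [a1, ← a2]
      ring
  case b2 =>
    intro a F G
    have htr : fTr e (fun x y z => a * F x y z + G x y z) ξ = a * fTr e F ξ + fTr e G ξ := by
      show (∑ i, (a * F (e i) (e i) ξ + G (e i) (e i) ξ)) = _
      rw [Finset.sum_add_distrib, ← Finset.mul_sum]
      rfl
    funext x y z
    simp only [L6, F7]
    rw [htr]
    ring
  case b3 =>
    intro F _
    have hc : fTr e (L6 n e ξ η F) ξ = fTr e F ξ - 2 * fTr e (F7 n e ξ η F) ξ := by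
      show (∑ i, (F (e i) (e i) ξ - 2 * F7 n e ξ η F (e i) (e i) ξ)) = _
      rw [Finset.sum_sub_distrib, ← Finset.mul_sum]
      rfl
    rw [hF7tr F] at hc
    funext x y z
    show L6 n e ξ η F x y z
      - 2 * (1 / (2 * (n : ℝ)) * fTr e (L6 n e ξ η F) ξ * (η z * ⟪x, y⟫ - η y * ⟪x, z⟫))
      = F x y z
    rw [hc]
    simp only [L6, F7]
    ring
  case b4 =>
    intro F G hF hG
    obtain ⟨⟨hInF, _, _⟩, _, _⟩ := hF
    obtain ⟨⟨hInG, _, _⟩, _, _⟩ := hG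
    have t1 : innerF e F (F7 n e ξ η G)
        = 2 * (1 / (2 * (n : ℝ)) * fTr e G ξ) * fTr e F ξ := by
      rw [icomm]
      exact keyF7 G F hInF.1 hInF.2.1
    have t2 : innerF e (F7 n e ξ η F) G
        = 2 * (1 / (2 * (n : ℝ)) * fTr e F ξ) * fTr e G ξ :=
      keyF7 F G hInG.1 hInG.2.1
    have t3 : innerF e (F7 n e ξ η F) (F7 n e ξ η G)
        = 2 * (1 / (2 * (n : ℝ)) * fTr e F ξ) * fTr e G ξ := by
      have h := keyF7 F (F7 n e ξ η G) (hF7InF G).1 (hF7InF G).2.1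
      rw [hF7tr G] at h
      exact h
    rw [expand, t1, t2, t3]
    ring
  case b5 =>
    intro A hAφ hAξ F hQS
    obtain ⟨⟨hInF, _, _⟩, _, _⟩ := hQS
    have hAsξ : A.symm ξ = ξ := by
      conv_lhs => rw [← hAξ]
      exact A.symm_apply_apply ξ
    have htr : fTr e (actA A F) ξ = fTr e F ξ := by
      show (∑ i, F (A.symm (e i)) (A.symm (e i)) (A.symm ξ)) = _
      rw [hAsξ]
      have h := aux_trace e (e.map A.symm) (fun u v => F u v ξ)
        (fun y => hInF.1.1 y ξ) (fun x => hInF.1.2.1 x ξ)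
      simpa only [OrthonormalBasis.map_apply, fTr] using h
    have hηA : ∀ x, η (A.symm x) = η x := by
      intro x
      rw [hη, hη]
      conv_lhs => rw [← hAsξ]
      exact A.symm.inner_map_map x ξ
    funext x y z
    show actA A F x y z - 2 * F7 n e ξ η (actA A F) x y z
      = F (A.symm x) (A.symm y) (A.symm z) - 2 * F7 n e ξ η F (A.symm x) (A.symm y) (A.symm z)
    have hia : ∀ u v : V, (⟪A.symm u, A.symm v⟫ : ℝ) = ⟪u, v⟫ :=
      fun u v => A.symm.inner_map_map u v
    simp only [F7, actA, htr, hηA, hia]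
  case b6 =>
    intro F hQS
    have hQS' := hQS
    obtain ⟨⟨hInF, hhF, hxi⟩, h4, h5⟩ := hQS'
    constructor
    · constructor
      · intro h
        refine ⟨hInF, ?_⟩
        funext x y z
        have h1 := cf3 h x y z
        simp only [L6, Pi.neg_apply] at h1
        linarith
      · intro hm
        funext x y z
        have h1 := cf3 hm.2 x y z
        simp only [L6, Pi.neg_apply]
        linarith
    · constructor
      · intro h
        have hpt : ∀ x y z, F7 n e ξ η F x y z = 0 := by
          intro x y z
          have h1 := cf3 h x y z
          simp only [L6] at h1
          linarith
        have htr0 : fTr e F ξ = 0 := by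
          rw [← hF7tr F]
          exact Finset.sum_eq_zero fun i _ => hpt _ _ _
        exact ⟨hInF, h4, h5, htr0⟩
      · intro hm
        funext x y z
        simp only [L6, F7, hm.2.2.2]
        ring
  case b7 =>
    intro F hQS
    have hQS' := hQS
    obtain ⟨⟨hInF, hhF, hxi⟩, h4, h5⟩ := hQS'
    have hquarter : (fun x y z => (1 / 4 : ℝ) * (F2 ξ η F x y z + F4 φ ξ η F x y z
        + F5 ξ η F x y z + F6 φ ξ η F x y z - 4 * F7 n e ξ η F x y z))
        = fun x y z => F x y z - F7 n e ξ η F x y z := by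
      funext x y z
      have b2 : F2 ξ η F x y z = F x y z := by
        simp only [F2]; exact (hstruct F hQS x y z).symm
      have b4 : F4 φ ξ η F x y z = F x y z := (cf3 h4 x y z).symm
      have b5 : F5 ξ η F x y z = F x y z := (cf3 h5 x y z).symm
      have b6 : F6 φ ξ η F x y z = F x y z := hF6eq F hQS x y z
      rw [b2, b4, b5, b6]
      ring
    refine ⟨⟨hF7InF F, ?_⟩, ?_, ?_⟩
    · funext x y z
      show F7 n e ξ η F x y z = 1 / (2 * (n : ℝ)) * fTr e (F7 n e ξ η F) ξ
        * (η z * ⟪x, y⟫ - η y * ⟪x, z⟫)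
      rw [hF7tr F]
      rfl
    · rw [hquarter]
      exact hGmem F hQS
    · intro x y z
      have := cf3 hquarter x y z
      rw [this]
      ring
  case b8 =>
    intro F hQS
    refine ⟨(F7 n e ξ η F, fun x y z => F x y z - F7 n e ξ η F x y z), ⟨?_, ?_, ?_⟩, ?_⟩
    · refine ⟨hF7InF F, ?_⟩
      funext x y z
      show F7 n e ξ η F x y z = 1 / (2 * (n : ℝ)) * fTr e (F7 n e ξ η F) ξ
        * (η z * ⟪x, y⟫ - η y * ⟪x, z⟫)
      rw [hF7tr F]
      rfl
    · exact hGmem F hQS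
    · funext x y z
      show F x y z = F7 n e ξ η F x y z + (F x y z - F7 n e ξ η F x y z)
      ring
    · rintro ⟨p1, p2⟩ ⟨h1, h2, h3⟩
      simp only at h1 h2 h3
      have hc1 : fTr e p1 ξ = fTr e F ξ := by
        rw [h3]
        show fTr e p1 ξ = ∑ i, (p1 (e i) (e i) ξ + p2 (e i) (e i) ξ)
        rw [Finset.sum_add_distrib]
        have h0 : fTr e p2 ξ = 0 := h2.2.2.2
        simp only [fTr] at h0 ⊢
        rw [h0, add_zero]
      have hp1 : p1 = F7 n e ξ η F := by
        rw [h1.2]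
        funext x y z
        show 1 / (2 * (n : ℝ)) * fTr e p1 ξ * (η z * ⟪x, y⟫ - η y * ⟪x, z⟫) = _
        rw [hc1]
        rfl
      refine Prod.ext hp1 ?_
      show p2 = fun x y z => F x y z - F7 n e ξ η F x y z
      funext x y z
      have h := cf3 h3 x y z
      simp only [Pi.add_apply] at h
      have h' := cf3 hp1 x y z
      rw [h, h']
      ring
  case b9 =>
    intro F G hF2m hG4m
    obtain ⟨hInF, hFeq⟩ := hF2m
    obtain ⟨hInG, _, _, htrG⟩ := hG4m
    have step : innerF e F G = innerF e (F7 n e ξ η F) G := by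
      conv_lhs => rw [hFeq]
    rw [step, keyF7 F G hInG.1 hInG.2.1, htrG]
    ring
end
end
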